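/- Let B be a finite set of monomials of R = ℝ[x₁,…,xₙ] of size r connected to 1 and σ a linear form on ⟨B⁺·B⁺⟩ such that rank H_σ^{B⁺,B⁺} = rank H_σ^{B,B} = |B| = r and H_σ^{B,B} is positive semidefinite. Let Mᵢ = [H_σ^{B,B}]⁻¹ [H_σ^{xᵢB,B}], where [H_σ^{xᵢB,B}] = [σ(xᵢ·m·m')]_{m,m'∈B}. Then σ coincides on ⟨B⁺·B⁺⟩ with ∑_{j=1}^r wⱼ e_{ζⱼ} for some weights wⱼ > 0 and pairwise distinct points ζⱼ ∈ ℝⁿ; the matrices M₁,…,Mₙ have r common linearly independent eigenvectors u₁,…,u_r (identified with polynomials uⱼ ∈ ⟨B⟩ via coordinates in the basis B); and the points and weights are recovered by ζ_{j,i} = σ(xᵢ·uⱼ)/σ(uⱼ) for 1 ≤ i ≤ n, and wⱼ = σ(uⱼ)/uⱼ(ζⱼ), for 1 ≤ j ≤ r. -/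

import Mathlib

open MvPolynomial Matrix

/-- A set `B` of monomials (identified with their exponent multi-indices) is
connected to 1 if it contains `1 = x^0` and every `m ≠ 1` in `B` is `xᵢ·m'`
for some variable `xᵢ` and some `m' ∈ B`. -/
def connectedTo1 {n : ℕ} (B : Finset (Fin n →₀ ℕ)) : Prop :=
  (0 : Fin n →₀ ℕ) ∈ B ∧ ∀ α ∈ B, α ≠ 0 → ∃ i : Fin n, ∃ β ∈ B, α = β + Finsupp.single i 1

/-- `B⁺ = B ∪ x₁B ∪ ⋯ ∪ xₙB` on the level of exponents. -/
noncomputable def plusSet {n : ℕ} (B : Finset (Fin n →₀ ℕ)) : Finset (Fin n →₀ ℕ) :=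
  B ∪ Finset.univ.biUnion fun i : Fin n => B.image (· + Finsupp.single i 1)

/-- The product set `B·B' = {m·m' : m ∈ B, m' ∈ B'}` on the level of exponents. -/
noncomputable def mulSet {n : ℕ} (B B' : Finset (Fin n →₀ ℕ)) : Finset (Fin n →₀ ℕ) :=
  (B ×ˢ B').image fun p => p.1 + p.2

/-- The span `⟨B⟩` of a set of monomials. -/
noncomputable def spanMon {n : ℕ} (B : Finset (Fin n →₀ ℕ)) :
    Submodule ℝ (MvPolynomial (Fin n) ℝ) :=
  Submodule.span ℝ ((fun α => (monomial α (1 : ℝ))) '' (B : Set (Fin n →₀ ℕ)))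

/-- The (truncated) Hankel matrix `[σ(m·m')]_{m ∈ B, m' ∈ B'}`. -/
noncomputable def hMat {n : ℕ} (σ : Module.Dual ℝ (MvPolynomial (Fin n) ℝ))
    (B B' : Finset (Fin n →₀ ℕ)) : Matrix ↥B ↥B' ℝ :=
  Matrix.of fun m m' => σ (monomial ((m : Fin n →₀ ℕ) + (m' : Fin n →₀ ℕ)) 1)

/-- The shifted Hankel matrix `[σ(xᵢ·m·m')]_{m ∈ B, m' ∈ B'}`. -/
noncomputable def hMatX {n : ℕ} (σ : Module.Dual ℝ (MvPolynomial (Fin n) ℝ)) (i : Fin n)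
    (B B' : Finset (Fin n →₀ ℕ)) : Matrix ↥B ↥B' ℝ :=
  Matrix.of fun m m' => σ (X i * monomial ((m : Fin n →₀ ℕ) + (m' : Fin n →₀ ℕ)) 1)

/-- Type synonym for `ι → ℝ` carrying a custom inner product. -/
def WtS (ι : Type*) : Type _ := ι → ℝ

instance (ι : Type*) : AddCommGroup (WtS ι) := inferInstanceAs (AddCommGroup (ι → ℝ))
noncomputable instance (ι : Type*) : Module ℝ (WtS ι) := inferInstanceAs (Module ℝ (ι → ℝ))
instance (ι : Type*) [Finite ι] : Module.Finite ℝ (WtS ι) :=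
  inferInstanceAs (Module.Finite ℝ (ι → ℝ))

lemma simulDiag {ι : Type*} [Fintype ι] [DecidableEq ι] {n r : ℕ}
    (hcard : Fintype.card ι = r)
    {H : Matrix ι ι ℝ} (hH : H.PosDef) (N : Fin n → Matrix ι ι ℝ)
    (hsym : ∀ i (x y : ι → ℝ), ((N i) *ᵥ x) ⬝ᵥ (H *ᵥ y) = x ⬝ᵥ (H *ᵥ ((N i) *ᵥ y)))
    (hcomm : ∀ i i', N i * N i' = N i' * N i) :
    ∃ (v : Fin r → (ι → ℝ)) (χ : Fin r → Fin n → ℝ),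
      LinearIndependent ℝ v ∧
      (∀ j i, (N i) *ᵥ (v j) = χ j i • v j) ∧
      (∀ j k, χ j ≠ χ k → v j ⬝ᵥ (H *ᵥ v k) = 0) ∧
      (∀ x : ι → ℝ, x ∈ Submodule.span ℝ (Set.range v)) := by
  classical
  have hHt : Hᵀ = H := by
    ext a b
    have := congrFun (congrFun hH.isHermitian.eq a) b
    simpa using this
  have hdsym : ∀ x y : ι → ℝ, x ⬝ᵥ (H *ᵥ y) = y ⬝ᵥ (H *ᵥ x) := by
    intro x y
    rw [dotProduct_mulVec, ← hHt, vecMul_transpose, hHt, dotProduct_comm]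
  letI core : InnerProductSpace.Core ℝ (WtS ι) :=
    { inner := fun x y => (x : ι → ℝ) ⬝ᵥ (H *ᵥ (y : ι → ℝ))
      conj_inner_symm := fun x y => by
        simp only [starRingEnd_apply, star_trivial]
        exact hdsym (y : ι → ℝ) (x : ι → ℝ)
      re_inner_nonneg := fun x => by
        have h := (posSemidef_iff_dotProduct_mulVec.mp hH.posSemidef).2 (@id (ι → ℝ) x)
        rw [star_trivial] at h
        exact h
      definite := fun x hx => by
        by_contra h
        exact absurd hx (ne_of_gt (by have h' := (posDef_iff_dotProduct_mulVec.mp hH).2 (x := @id (ι → ℝ) x) h; rw [star_trivial] at h'; exact h'))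
      add_left := fun x y z => add_dotProduct _ _ _
      smul_left := fun x y c => by
        simp only [starRingEnd_apply, star_trivial]
        show ((c • x : ι → ℝ)) ⬝ᵥ (H *ᵥ (y : ι → ℝ)) = c * ((x : ι → ℝ) ⬝ᵥ (H *ᵥ (y : ι → ℝ)))
        exact smul_dotProduct c (x : ι → ℝ) (H *ᵥ (y : ι → ℝ)) }
  letI nacg : NormedAddCommGroup (WtS ι) := core.toNormedAddCommGroup
  letI ips : InnerProductSpace ℝ (WtS ι) := InnerProductSpace.ofCore core.toCore
  have hinner : ∀ x y : WtS ι, inner ℝ x y = (x : ι → ℝ) ⬝ᵥ (H *ᵥ (y : ι → ℝ)) :=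
    fun x y => rfl
  set T : Fin n → (WtS ι →ₗ[ℝ] WtS ι) := fun i =>
    (show ((ι → ℝ) →ₗ[ℝ] (ι → ℝ)) from (N i).mulVecLin) with hT
  have hTapp : ∀ i (x : WtS ι), T i x = (N i) *ᵥ (x : ι → ℝ) := fun i x => rfl
  have hTsym : ∀ i, (T i).IsSymmetric := by
    intro i x y
    rw [hinner, hinner, hTapp, hTapp]
    exact hsym i x y
  have hTcomm : Pairwise (Function.onFun Commute T) := by
    intro i i' _
    show T i * T i' = T i' * T i
    ext x
    show (N i) *ᵥ ((N i') *ᵥ (@id (ι → ℝ) x)) = (N i') *ᵥ ((N i) *ᵥ (@id (ι → ℝ) x))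
    rw [mulVec_mulVec, mulVec_mulVec, hcomm]
  set W : (Fin n → ℝ) → Submodule ℝ (WtS ι) :=
    fun χ => ⨅ i, Module.End.eigenspace (T i) (χ i) with hW
  have hOF := LinearMap.IsSymmetric.orthogonalFamily_iInf_eigenspaces hTsym
  have hTop := LinearMap.IsSymmetric.iSup_iInf_eq_top_of_commute hTsym hTcomm
  have hInt : DirectSum.IsInternal W := by
    rw [hOF.isInternal_iff, hTop, Submodule.top_orthogonal_eq_bot]
  let bW : ∀ χ, Module.Basis (Fin (Module.finrank ℝ (W χ))) ℝ (W χ) :=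
    fun χ => Module.finBasis ℝ (W χ)
  let C := hInt.collectedBasis bW
  letI : Fintype (Σ χ : Fin n → ℝ, Fin (Module.finrank ℝ (W χ))) :=
    FiniteDimensional.fintypeBasisIndex C
  have hcardC : Fintype.card (Σ χ : Fin n → ℝ, Fin (Module.finrank ℝ (W χ))) = r := by
    rw [← Module.finrank_eq_card_basis C]
    rw [show Module.finrank ℝ (WtS ι) = Module.finrank ℝ (ι → ℝ) from rfl,
      Module.finrank_pi, hcard]
  let e := Fintype.equivFinOfCardEq hcardC
  refine ⟨fun j => C (e.symm j), fun j => (e.symm j).1, ?_, ?_, ?_, ?_⟩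
  · exact C.linearIndependent.comp e.symm e.symm.injective
  · intro j i
    have hmem : C (e.symm j) ∈ W (e.symm j).1 := hInt.collectedBasis_mem bW (e.symm j)
    have h2 := (Submodule.mem_iInf _).mp hmem i
    have h3 := Module.End.mem_eigenspace_iff.mp h2
    rw [hTapp] at h3
    exact h3
  · intro j k hne
    exact hOF hne ⟨_, hInt.collectedBasis_mem bW (e.symm j)⟩
      ⟨_, hInt.collectedBasis_mem bW (e.symm k)⟩
  · intro x
    show x ∈ Submodule.span ℝ (Set.range fun j => C (e.symm j))
    rw [show (fun j => C (e.symm j)) = C ∘ e.symm from rfl, Set.range_comp,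
      e.symm.surjective.range_eq, Set.image_univ, C.span_eq]
    trivial

/-- under the flat extension condition with `H_σ^{B,B} ⪰ 0`, `σ` coincides
on `⟨B⁺·B⁺⟩` with `∑ⱼ wⱼ e_{ζⱼ}` for positive weights and distinct real points; the
matrices `Mᵢ = [H_σ^{B,B}]⁻¹[H_σ^{xᵢB,B}]` have `r` common linearly independent
eigenvectors `uⱼ` (coordinate vectors of polynomials `uⱼ ∈ ⟨B⟩` in the basis `B`), with
`Mᵢ uⱼ = ζ_{j,i} uⱼ`, and the points and weights are recovered by
`ζ_{j,i} = σ(xᵢ uⱼ)/σ(uⱼ)` and `wⱼ = σ(uⱼ)/uⱼ(ζⱼ)`. -/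
theorem stmt11 (n r : ℕ) (B : Finset (Fin n →₀ ℕ)) (hB : connectedTo1 B)
    (hcard : B.card = r)
    (σ : Module.Dual ℝ (MvPolynomial (Fin n) ℝ))
    (hrk1 : (hMat σ (plusSet B) (plusSet B)).rank = r)
    (hrk2 : (hMat σ B B).rank = r)
    (hpsd : ∀ p ∈ spanMon B, 0 ≤ σ (p ^ 2)) :
    ∃ (w : Fin r → ℝ) (ζ : Fin r → (Fin n → ℝ)) (u : Fin r → (↥B → ℝ)),
      (∀ j, 0 < w j) ∧ Function.Injective ζ ∧
      (∀ α ∈ mulSet (plusSet B) (plusSet B),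
        σ (monomial α 1) = ∑ j, w j * MvPolynomial.eval (ζ j) (monomial α (1 : ℝ))) ∧
      LinearIndependent ℝ u ∧
      (∀ (i : Fin n) (j : Fin r),
        ((hMat σ B B)⁻¹ * hMatX σ i B B).mulVec (u j) = ζ j i • u j) ∧
      (∀ (j : Fin r) (g : MvPolynomial (Fin n) ℝ),
        g = ∑ α : ↥B, u j α • monomial (α : Fin n →₀ ℕ) (1 : ℝ) →
        (∀ i : Fin n, ζ j i = σ (X i * g) / σ g) ∧
        w j = σ g / MvPolynomial.eval (ζ j) g) := by
  classical
  obtain ⟨h0B, hconn⟩ := hB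
  set H := hMat σ B B with hHdef
  let A : Fin n → Matrix ↥B ↥B ℝ := fun i => hMatX σ i B B
  have hcardB : Fintype.card ↥B = r := by rw [Fintype.card_coe, hcard]
  have hσcongr : ∀ {α β : Fin n →₀ ℕ}, α = β → σ (monomial α (1:ℝ)) = σ (monomial β 1) := by
    intro α β h; rw [h]
  have hHapp : ∀ b b' : ↥B, H b b' = σ (monomial ((b : Fin n →₀ ℕ) + (b' : Fin n →₀ ℕ)) 1) := fun _ _ => rfl
  have hAapp : ∀ (i : Fin n) (b b' : ↥B),
      A i b b' = σ (X i * monomial ((b : Fin n →₀ ℕ) + (b' : Fin n →₀ ℕ)) 1) := fun _ _ _ => rfl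
  have hmv : ∀ (M : Matrix ↥B ↥B ℝ) (x : ↥B → ℝ) (b : ↥B),
      (M *ᵥ x) b = ∑ c : ↥B, M b c * x c := fun _ _ _ => rfl
  have hdp : ∀ (x y : ↥B → ℝ), x ⬝ᵥ y = ∑ c : ↥B, x c * y c := fun _ _ => rfl
  have hXmon : ∀ (i : Fin n) (α : Fin n →₀ ℕ),
      X i * monomial α (1:ℝ) = monomial (α + Finsupp.single i 1) 1 := by
    intro i α
    rw [X, monomial_mul, one_mul, add_comm]
  have hAmon : ∀ (i : Fin n) (b b' : ↥B),
      A i b b' = σ (monomial ((b : Fin n →₀ ℕ) + (b' : Fin n →₀ ℕ) + Finsupp.single i 1) 1) := by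
    intro i b b'; rw [hAapp, hXmon]
  have hHt : Hᵀ = H := by
    ext b b'
    show H b' b = H b b'
    rw [hHapp, hHapp]; exact hσcongr (add_comm _ _)
  have hAt : ∀ i, (A i)ᵀ = A i := by
    intro i; ext b b'
    show A i b' b = A i b b'
    rw [hAmon, hAmon]
    exact hσcongr (by abel)
  have hHherm : H.IsHermitian := by
    show Hᴴ = H
    rw [conjTranspose_eq_transpose_of_trivial, hHt]
  have hdsym : ∀ (M : Matrix ↥B ↥B ℝ), Mᵀ = M →
      ∀ x y : ↥B → ℝ, x ⬝ᵥ (M *ᵥ y) = y ⬝ᵥ (M *ᵥ x) := by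
    intro M hM x y
    rw [dotProduct_mulVec, ← hM, vecMul_transpose, hM, dotProduct_comm]
  have hmd : ∀ (M : Matrix ↥B ↥B ℝ) (x y : ↥B → ℝ),
      (M *ᵥ x) ⬝ᵥ y = x ⬝ᵥ (Mᵀ *ᵥ y) := by
    intro M x y
    rw [dotProduct_comm, dotProduct_mulVec, mulVec_transpose, dotProduct_comm]
  -- H is positive semidefinite
  have hHpsd : H.PosSemidef := by
    refine posSemidef_iff_dotProduct_mulVec.mpr ⟨hHherm, fun x => ?_⟩
    have hp : (∑ b : ↥B, x b • monomial (↑b : Fin n →₀ ℕ) (1:ℝ)) ∈ spanMon B := by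
      refine Submodule.sum_mem _ fun b _ => Submodule.smul_mem _ _ (Submodule.subset_span ?_)
      exact ⟨↑b, b.2, rfl⟩
    have h1 := hpsd _ hp
    have h2 : σ ((∑ b : ↥B, x b • monomial (↑b : Fin n →₀ ℕ) (1:ℝ)) ^ 2)
        = star x ⬝ᵥ (H *ᵥ x) := by
      rw [sq, Finset.sum_mul_sum]
      have hterm : ∀ (b b' : ↥B),
          (x b • monomial (↑b : Fin n →₀ ℕ) (1:ℝ)) * (x b' • monomial (↑b' : Fin n →₀ ℕ) 1)
          = (x b * x b') • monomial ((b : Fin n →₀ ℕ) + (b' : Fin n →₀ ℕ)) 1 := by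
        intro b b'; rw [smul_mul_smul_comm, monomial_mul, one_mul]
      simp only [hterm, map_sum, LinearMap.map_smul, smul_eq_mul]
      rw [star_trivial, hdp]
      refine Finset.sum_congr rfl fun b _ => ?_
      rw [hmv, Finset.mul_sum]
      refine Finset.sum_congr rfl fun b' _ => ?_
      rw [hHapp]; ring
    rw [← h2]; exact h1
  -- H is invertible (full rank) hence positive definite
  have hHinj : Function.Injective (H.mulVec) := by
    have hfr : Module.finrank ℝ (LinearMap.range H.mulVecLin) = Module.finrank ℝ (↥B → ℝ) := by
      rw [Module.finrank_pi, hcardB]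
      exact hrk2
    have hrange : LinearMap.range H.mulVecLin = ⊤ := Submodule.eq_top_of_finrank_eq hfr
    have hsurj : Function.Surjective H.mulVecLin := LinearMap.range_eq_top.mp hrange
    exact (LinearMap.injective_iff_surjective).mpr hsurj
  have hHpd : H.PosDef := by
    refine posDef_iff_dotProduct_mulVec.mpr ⟨hHherm, fun x hx => lt_of_le_of_ne ((posSemidef_iff_dotProduct_mulVec.mp hHpsd).2 x) fun h => hx ?_⟩
    have h0 : H *ᵥ x = 0 := (hHpsd.dotProduct_mulVec_zero_iff x).mp h.symm
    exact hHinj (by rw [h0, mulVec_zero])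
  have hdet : IsUnit H.det := (Matrix.isUnit_iff_isUnit_det H).mp hHpd.isUnit
  have hHinvH : H⁻¹ * H = 1 := nonsing_inv_mul H hdet
  have hHHinv : H * H⁻¹ = 1 := mul_nonsing_inv H hdet
  have hHinvt : (H⁻¹)ᵀ = H⁻¹ := by rw [transpose_nonsing_inv, hHt]
  -- membership facts for plusSet
  have hmemB : ∀ m ∈ B, m ∈ plusSet B := fun m hm => Finset.mem_union_left _ hm
  have hmemX : ∀ m ∈ B, ∀ i : Fin n, m + Finsupp.single i 1 ∈ plusSet B := by
    intro m hm i
    refine Finset.mem_union_right _ (Finset.mem_biUnion.mpr ⟨i, Finset.mem_univ _, ?_⟩)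
    exact Finset.mem_image.mpr ⟨m, hm, rfl⟩
  have hplus : ∀ m ∈ plusSet B, m ∈ B ∨ ∃ i : Fin n, ∃ b ∈ B, m = b + Finsupp.single i 1 := by
    intro m hm
    rcases Finset.mem_union.mp hm with h | h
    · exact Or.inl h
    · obtain ⟨i, _, h2⟩ := Finset.mem_biUnion.mp h
      obtain ⟨b, hb, rfl⟩ := Finset.mem_image.mp h2
      exact Or.inr ⟨i, b, hb, rfl⟩
  -- the flat extension property
  have hcol : ∀ m ∈ plusSet B, ∃ c : ↥B → ℝ, ∀ m' ∈ plusSet B,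
      σ (monomial (m + m') 1) = ∑ b : ↥B, c b * σ (monomial ((b : Fin n →₀ ℕ) + m') 1) := by
    intro m hm
    set K := hMat σ (plusSet B) (plusSet B) with hKdef
    let inc : ↥B → ↥(plusSet B) := fun b => ⟨↑b, hmemB _ b.2⟩
    let cols : ↥B → (↥(plusSet B) → ℝ) := fun b => Kᵀ (inc b)
    have hcolsli : LinearIndependent ℝ cols := by
      rw [Fintype.linearIndependent_iff]
      intro g hg
      have h2 : H *ᵥ g = 0 := by
        funext b''
        have h3 := congrFun hg (inc b'')
        simp only [Finset.sum_apply, Pi.smul_apply, smul_eq_mul, Pi.zero_apply] at h3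
        rw [hmv, Pi.zero_apply]
        calc ∑ c : ↥B, H b'' c * g c
            = ∑ b : ↥B, g b * cols b (inc b'') := by
              refine Finset.sum_congr rfl fun c _ => ?_
              rw [mul_comm]
              rfl
          _ = 0 := h3
      have hg0 : g = 0 := hHinj (by rw [h2, mulVec_zero])
      intro b'
      rw [hg0]
      rfl
    have hsub : Submodule.span ℝ (Set.range cols) ≤ Submodule.span ℝ (Set.range Kᵀ) :=
      Submodule.span_mono (by rintro _ ⟨b, rfl⟩; exact ⟨inc b, rfl⟩)
    have hfr1 : Module.finrank ℝ (Submodule.span ℝ (Set.range cols)) = r := by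
      rw [finrank_span_eq_card hcolsli, hcardB]
    have hfr2 : Module.finrank ℝ (Submodule.span ℝ (Set.range Kᵀ)) = r := by
      have := K.rank_eq_finrank_span_cols; rw [hrk1] at this; exact this.symm
    have hEq : Submodule.span ℝ (Set.range cols) = Submodule.span ℝ (Set.range Kᵀ) :=
      Submodule.eq_of_le_of_finrank_le hsub (by rw [hfr1, hfr2])
    have hmem : Kᵀ ⟨m, hm⟩ ∈ Submodule.span ℝ (Set.range cols) := by
      rw [hEq]
      exact Submodule.subset_span ⟨⟨m, hm⟩, rfl⟩
    obtain ⟨c, hc⟩ := (Submodule.mem_span_range_iff_exists_fun ℝ).mp hmem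
    refine ⟨c, fun m' hm' => ?_⟩
    have h3 := congrFun hc ⟨m', hm'⟩
    simp only [Finset.sum_apply, Pi.smul_apply, smul_eq_mul] at h3
    calc σ (monomial (m + m') 1) = Kᵀ ⟨m, hm⟩ ⟨m', hm'⟩ := hσcongr (add_comm m m')
      _ = ∑ b : ↥B, c b * cols b ⟨m', hm'⟩ := h3.symm
      _ = ∑ b : ↥B, c b * σ (monomial ((b : Fin n →₀ ℕ) + m') 1) :=
          Finset.sum_congr rfl fun b _ => congrArg (fun t => c b * t) (hσcongr (add_comm m' _))
  set colv : (Fin n →₀ ℕ) → ↥B → ℝ := fun m b => σ (monomial (m + (b : Fin n →₀ ℕ)) 1) with hcolvdef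
  set P : (Fin n →₀ ℕ) → ↥B → ℝ := fun m => H⁻¹ *ᵥ colv m with hPdef
  have hcolv : ∀ m (b : ↥B), colv m b = σ (monomial (m + (b : Fin n →₀ ℕ)) 1) := fun _ _ => rfl
  have hPapp : ∀ m, P m = H⁻¹ *ᵥ colv m := fun _ => rfl
  have hHP : ∀ m, H *ᵥ P m = colv m := by
    intro m
    rw [hPapp, mulVec_mulVec, hHHinv, one_mulVec]
  have hpair : ∀ m ∈ plusSet B, ∀ m' ∈ plusSet B,
      σ (monomial (m + m') 1) = P m ⬝ᵥ (H *ᵥ P m') := by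
    intro m hm m' hm'
    obtain ⟨c, hc⟩ := hcol m hm
    have h1 : H *ᵥ c = colv m := by
      funext b'
      rw [hmv, hcolv, hc ↑b' (hmemB _ b'.2)]
      refine Finset.sum_congr rfl fun b _ => ?_
      rw [hHapp, mul_comm]
      exact congrArg (fun t => c b * t) (hσcongr (add_comm _ _))
    have hcP : c = P m := by
      rw [hPapp, ← h1, mulVec_mulVec, hHinvH, one_mulVec]
    rw [hc m' hm', hcP, hHP, hdp]
    refine Finset.sum_congr rfl fun b _ => ?_
    rw [hcolv]
    exact congrArg (fun t => P m b * t) (hσcongr (add_comm _ _))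
  have hPB : ∀ b : ↥B, P ↑b = Pi.single b 1 := by
    intro b
    have h1 : colv ↑b = H *ᵥ Pi.single b 1 := by
      funext b'
      simp only [mulVec_single_one, col_apply, mul_one]
      rw [hcolv, hHapp]
      exact hσcongr (add_comm _ _)
    rw [hPapp, h1, mulVec_mulVec, hHinvH, one_mulVec]
  have hPX : ∀ (b : ↥B) (i : Fin n),
      P ((b : Fin n →₀ ℕ) + Finsupp.single i 1) = (H⁻¹ * A i) *ᵥ Pi.single b 1 := by
    intro b i
    have h1 : colv ((b : Fin n →₀ ℕ) + Finsupp.single i 1) = A i *ᵥ Pi.single b 1 := by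
      funext b'
      simp only [mulVec_single_one, col_apply, mul_one]
      rw [hcolv, hAmon]
      refine hσcongr ?_
      abel
    rw [hPapp, h1, mulVec_mulVec]
  -- the key commutation relations
  have hAHA : ∀ i i', A i * H⁻¹ * A i' = A i' * H⁻¹ * A i := by
    have key : ∀ (i i' : Fin n) (b b' : ↥B), (A i * H⁻¹ * A i') b b'
        = σ (monomial (((b : Fin n →₀ ℕ) + Finsupp.single i 1)
            + ((b' : Fin n →₀ ℕ) + Finsupp.single i' 1)) 1) := by
      intro i i' b b'
      have h1 := hpair _ (hmemX _ b.2 i) _ (hmemX _ b'.2 i')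
      rw [hPX b i, hPX b' i', mulVec_mulVec, ← mul_assoc, hHHinv, one_mul, hmd, transpose_mul,
        hHinvt, hAt, mulVec_mulVec, single_dotProduct, one_mul] at h1
      simp only [mulVec_single_one, col_apply, mul_one] at h1
      exact h1.symm
    intro i i'
    ext b b'
    rw [key i i' b b', key i' i b b']
    refine hσcongr ?_
    abel
  have hNsym : ∀ (i : Fin n) (x y : ↥B → ℝ),
      ((H⁻¹ * A i) *ᵥ x) ⬝ᵥ (H *ᵥ y) = x ⬝ᵥ (H *ᵥ ((H⁻¹ * A i) *ᵥ y)) := by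
    intro i x y
    rw [hmd, transpose_mul, hHinvt, hAt, mulVec_mulVec, mul_assoc, hHinvH, mul_one,
      mulVec_mulVec, ← mul_assoc, hHHinv, one_mul]
  have hNcomm : ∀ i i' : Fin n, (H⁻¹ * A i) * (H⁻¹ * A i') = (H⁻¹ * A i') * (H⁻¹ * A i) := by
    intro i i'
    have h1 : (H⁻¹ * A i) * (H⁻¹ * A i') = H⁻¹ * (A i * H⁻¹ * A i') := by
      simp only [mul_assoc]
    have h2 : (H⁻¹ * A i') * (H⁻¹ * A i) = H⁻¹ * (A i' * H⁻¹ * A i) := by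
      simp only [mul_assoc]
    rw [h1, h2, hAHA]
  obtain ⟨v, χ, hli, heig, horth, hspan⟩ :=
    simulDiag hcardB hHpd (fun i => H⁻¹ * A i) hNsym hNcomm
  have hAv : ∀ (i : Fin n) (j : Fin r), A i *ᵥ v j = χ j i • (H *ᵥ v j) := by
    intro i j
    have h2 : H *ᵥ ((H⁻¹ * A i) *ᵥ v j) = H *ᵥ (χ j i • v j) := by rw [heig j i]
    rw [mulVec_mulVec, ← mul_assoc, hHHinv, one_mul, mulVec_smul] at h2
    exact h2
  set pw : (Fin n → ℝ) → (Fin n →₀ ℕ) → ℝ := fun z α => α.prod fun i k => z i ^ k with hpwdef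
  have hpw0 : ∀ z, pw z 0 = 1 := fun z => Finsupp.prod_zero_index
  have hpwadd : ∀ z α β, pw z (α + β) = pw z α * pw z β := by
    intro z α β
    exact Finsupp.prod_add_index' (fun i => pow_zero (z i)) (fun i k k' => pow_add (z i) k k')
  have hpwsingle : ∀ z (i : Fin n), pw z (Finsupp.single i 1) = z i := by
    intro z i
    show (Finsupp.single i 1).prod (fun i' k => z i' ^ k) = z i
    rw [Finsupp.prod_single_index (h := fun i' k => z i' ^ k) (pow_zero (z i)), pow_one]
  have hevalmon : ∀ (z : Fin n → ℝ) (α : Fin n →₀ ℕ),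
      MvPolynomial.eval z (monomial α (1:ℝ)) = pw z α := by
    intro z α
    rw [eval_monomial, one_mul]
  -- the connectedness induction
  have hzB : ∀ (j : Fin r) (d : ℕ) (b : Fin n →₀ ℕ) (hb : b ∈ B),
      (b.sum fun _ k => k) ≤ d →
      (H *ᵥ v j) ⟨b, hb⟩ = pw (χ j) b * (H *ᵥ v j) ⟨0, h0B⟩ := by
    intro j d
    induction d with
    | zero =>
      intro b hb hd
      have hb0 : b = 0 := by
        ext a
        simp only [Finsupp.coe_zero, Pi.zero_apply]
        by_contra ha
        have hmem : a ∈ b.support := Finsupp.mem_support_iff.mpr ha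
        have h1 : b a ≤ b.sum fun _ k => k := Finset.single_le_sum (fun _ _ => Nat.zero_le _) hmem
        omega
      subst hb0
      rw [hpw0, one_mul]
    | succ d ih =>
      intro b hb hd
      by_cases hb0 : b = 0
      · subst hb0; rw [hpw0, one_mul]
      · obtain ⟨i, β, hβ, hbe⟩ := hconn b hb hb0
        have hβB : β ∈ B := hβ
        have hβd : (β.sum fun _ k => k) ≤ d := by
          have h1 : (b.sum fun _ k => k) = (β.sum fun _ k => k) + 1 := by
            rw [hbe]
            rw [Finsupp.sum_add_index' (fun _ => rfl) (fun _ _ _ => rfl)]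
            rw [Finsupp.sum_single_index rfl]
          omega
        have hHA : ∀ c : ↥B, H ⟨b, hb⟩ c = A i ⟨β, hβB⟩ c := by
          intro c
          rw [hHapp, hAmon]
          exact hσcongr (show b + (c : Fin n →₀ ℕ)
            = β + (c : Fin n →₀ ℕ) + Finsupp.single i 1 by rw [hbe]; abel)
        have h2 : (H *ᵥ v j) ⟨b, hb⟩ = (A i *ᵥ v j) ⟨β, hβB⟩ := by
          rw [hmv, hmv]
          exact Finset.sum_congr rfl fun c _ => by rw [hHA c]
        rw [h2, hAv, Pi.smul_apply, smul_eq_mul, ih β hβB hβd, hbe, hpwadd, hpwsingle]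
        ring
  have hzB' : ∀ (j : Fin r) (b : ↥B),
      (H *ᵥ v j) b = pw (χ j) ↑b * (H *ᵥ v j) ⟨0, h0B⟩ := by
    intro j b
    obtain ⟨b, hb⟩ := b
    exact hzB j _ b hb le_rfl
  have hvne : ∀ j, v j ≠ 0 := fun j => hli.ne_zero j
  have hHvne : ∀ j, H *ᵥ v j ≠ 0 := by
    intro j h
    exact hvne j (hHinj (by rw [h, mulVec_zero]))
  have hc0 : ∀ j, (H *ᵥ v j) ⟨0, h0B⟩ ≠ 0 := by
    intro j h
    refine hHvne j ?_
    funext b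
    rw [hzB' j b, h, mul_zero]
    exact rfl
  have hvHv : ∀ j, 0 < v j ⬝ᵥ (H *ᵥ v j) := by
    intro j
    have := (posDef_iff_dotProduct_mulVec.mp hHpd).2 (hvne j)
    rwa [star_trivial] at this
  have hχinj : Function.Injective χ := by
    intro j k hjk
    by_contra hne
    set a := (H *ᵥ v k) ⟨0, h0B⟩ with hadef
    set c := (H *ᵥ v j) ⟨0, h0B⟩ with hcdef
    have hw : H *ᵥ (a • v j - c • v k) = 0 := by
      rw [mulVec_sub, mulVec_smul, mulVec_smul]
      funext b
      show a * (H *ᵥ v j) b - c * (H *ᵥ v k) b = (0 : ↥B → ℝ) b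
      rw [hzB' j b, hzB' k b, ← hadef, ← hcdef, hjk, Pi.zero_apply]
      ring
    have hw0 : a • v j - c • v k = 0 := hHinj (by rw [hw, mulVec_zero])
    have h1 : ∀ l : Fin r, (if l = j then a else if l = k then -c else 0) • v l
        = (if l = j then a • v l else 0) + (if l = k then (-c) • v l else 0) := by
      intro l
      by_cases h2 : l = j
      · subst h2
        rw [if_pos rfl, if_pos rfl, if_neg hne, add_zero]
      · by_cases h3 : l = k
        · subst h3
          rw [if_neg h2, if_neg h2, if_pos rfl, if_pos rfl, zero_add]
        · rw [if_neg h2, if_neg h2, if_neg h3, if_neg h3, zero_smul, add_zero]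
    have hgsum : ∑ l : Fin r, (if l = j then a else if l = k then -c else 0) • v l
        = a • v j - c • v k := by
      rw [Finset.sum_congr rfl (fun l _ => h1 l), Finset.sum_add_distrib,
        Fintype.sum_ite_eq' j (fun l => a • v l),
        Fintype.sum_ite_eq' k (fun l => (-c) • v l), neg_smul, sub_eq_add_neg]
    have hlz := Fintype.linearIndependent_iff.mp hli
      (fun l => if l = j then a else if l = k then -c else 0) (by rw [hgsum, hw0]) j
    simp only [if_pos rfl] at hlz
    exact hc0 k hlz
  have horth' : ∀ j k, j ≠ k → v j ⬝ᵥ (H *ᵥ v k) = 0 := by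
    intro j k hjk
    exact horth j k fun h => hjk (hχinj h)
  have hdotsum : ∀ (c : Fin r → ℝ) (w : ↥B → ℝ),
      (∑ l, c l • v l) ⬝ᵥ w = ∑ l, c l * (v l ⬝ᵥ w) := by
    intro c w
    rw [hdp]
    simp only [Finset.sum_apply, Pi.smul_apply, smul_eq_mul, Finset.sum_mul]
    rw [Finset.sum_comm]
    refine Finset.sum_congr rfl fun l _ => ?_
    rw [hdp, Finset.mul_sum]
    refine Finset.sum_congr rfl fun b _ => ?_
    ring
  have hexp : ∀ x y : ↥B → ℝ, x ⬝ᵥ (H *ᵥ y)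
      = ∑ j, (x ⬝ᵥ (H *ᵥ v j)) * (y ⬝ᵥ (H *ᵥ v j)) / (v j ⬝ᵥ (H *ᵥ v j)) := by
    intro x y
    obtain ⟨c, hc⟩ := (Submodule.mem_span_range_iff_exists_fun ℝ).mp (hspan y)
    have hcl : ∀ l, c l * (v l ⬝ᵥ (H *ᵥ v l)) = y ⬝ᵥ (H *ᵥ v l) := by
      intro l
      rw [← hc, hdotsum, Finset.sum_eq_single l
        (fun m _ hm => by rw [horth' m l hm, mul_zero])
        (fun h => absurd (Finset.mem_univ l) h)]
    have h1 : x ⬝ᵥ (H *ᵥ y) = ∑ l, c l * (x ⬝ᵥ (H *ᵥ v l)) := by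
      rw [hdsym H hHt, ← hc, hdotsum]
      refine Finset.sum_congr rfl fun l _ => ?_
      rw [hdsym H hHt (v l) x]
    rw [h1]
    refine Finset.sum_congr rfl fun l _ => ?_
    rw [eq_div_iff (hvHv l).ne']
    rw [mul_comm (c l) _, mul_assoc, hcl l]
  have hPv : ∀ m ∈ plusSet B, ∀ j, P m ⬝ᵥ (H *ᵥ v j) = pw (χ j) m * (H *ᵥ v j) ⟨0, h0B⟩ := by
    intro m hm j
    rcases hplus m hm with hmB | ⟨i, b, hbB, rfl⟩
    · rw [show P m = Pi.single (⟨m, hmB⟩ : ↥B) 1 from hPB ⟨m, hmB⟩, single_dotProduct, one_mul]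
      exact hzB' j ⟨m, hmB⟩
    · rw [show P (b + Finsupp.single i 1) = (H⁻¹ * A i) *ᵥ Pi.single (⟨b, hbB⟩ : ↥B) 1 from
        hPX ⟨b, hbB⟩ i]
      rw [hNsym i, heig j i, mulVec_smul, dotProduct_smul, smul_eq_mul, single_dotProduct,
        one_mul, hzB' j ⟨b, hbB⟩, hpwadd, hpwsingle]
      ring
  -- assemble the answer
  refine ⟨fun j => ((H *ᵥ v j) ⟨0, h0B⟩) ^ 2 / (v j ⬝ᵥ (H *ᵥ v j)), χ, v, ?_, hχinj, ?_, hli,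
    ?_, ?_⟩
  · intro j
    show 0 < ((H *ᵥ v j) ⟨0, h0B⟩) ^ 2 / (v j ⬝ᵥ (H *ᵥ v j))
    have h1 := hc0 j
    have h2 := hvHv j
    positivity
  · intro α hα
    obtain ⟨p, hp, rfl⟩ := Finset.mem_image.mp hα
    obtain ⟨hp1, hp2⟩ := Finset.mem_product.mp hp
    show σ (monomial (p.1 + p.2) 1) = _
    rw [hpair p.1 hp1 p.2 hp2, hexp]
    refine Finset.sum_congr rfl fun j _ => ?_
    rw [hPv p.1 hp1 j, hPv p.2 hp2 j]
    show _ = ((H *ᵥ v j) ⟨0, h0B⟩) ^ 2 / (v j ⬝ᵥ (H *ᵥ v j))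
      * MvPolynomial.eval (χ j) (monomial (p.1 + p.2) 1)
    rw [hevalmon, hpwadd]
    ring
  · intro i j
    exact heig j i
  · intro j g hg
    have hσg : σ g = (H *ᵥ v j) ⟨0, h0B⟩ := by
      rw [hg, map_sum, hmv]
      refine Finset.sum_congr rfl fun b _ => ?_
      rw [LinearMap.map_smul, smul_eq_mul, hHapp, mul_comm]
      exact congrArg (fun t => t * v j b) (hσcongr (zero_add (↑b : Fin n →₀ ℕ))).symm
    have hσxg : ∀ i : Fin n, σ (X i * g) = χ j i * (H *ᵥ v j) ⟨0, h0B⟩ := by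
      intro i
      have h1 : X i * g = ∑ b : ↥B, v j b • (X i * monomial (↑b : Fin n →₀ ℕ) 1) := by
        rw [hg, Finset.mul_sum]
        refine Finset.sum_congr rfl fun b _ => ?_
        rw [mul_smul_comm]
      have h2 : σ (X i * g) = (A i *ᵥ v j) ⟨0, h0B⟩ := by
        rw [h1, map_sum, hmv]
        refine Finset.sum_congr rfl fun b _ => ?_
        rw [LinearMap.map_smul, smul_eq_mul, hAapp, mul_comm]
        exact congrArg (fun t => t * v j b)
          (congrArg σ (congrArg (X i * ·) (by rw [zero_add]))).symm
      rw [h2, hAv, Pi.smul_apply, smul_eq_mul]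
    have heval : MvPolynomial.eval (χ j) g * (H *ᵥ v j) ⟨0, h0B⟩ = v j ⬝ᵥ (H *ᵥ v j) := by
      rw [hg, map_sum, Finset.sum_mul, hdp]
      refine Finset.sum_congr rfl fun b _ => ?_
      rw [smul_eval, hevalmon, hzB' j b]
      ring
    constructor
    · intro i
      rw [hσxg i, hσg, mul_div_assoc, div_self (hc0 j), mul_one]
    · rw [hσg]
      rw [eq_div_iff (fun h => (hvHv j).ne' (by rw [← heval, h, zero_mul]))]
      show ((H *ᵥ v j) ⟨0, h0B⟩) ^ 2 / (v j ⬝ᵥ (H *ᵥ v j)) * MvPolynomial.eval (χ j) g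
        = (H *ᵥ v j) ⟨0, h0B⟩
      have heq : MvPolynomial.eval (χ j) g ≠ 0 :=
        fun h => (hvHv j).ne' (by rw [← heval, h, zero_mul])
      rw [← heval]
      field_simp [hc0 j, heq]
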